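/- For any R, Q ∈ SO(3), it holds that ‖Q − R Q^T R + R − Q R^T Q‖_F ≤ 2√3 · ‖R − Q‖_F². -/
import Mathlib

open Matrix

noncomputable def frob (M : Matrix (Fin 3) (Fin 3) ℝ) : ℝ :=
  Real.sqrt (∑ i, ∑ j, (M i j) ^ 2)

attribute [local instance] Matrix.frobeniusNormedAddCommGroup Matrix.frobeniusNormedRing

lemma frob_eq_norm (M : Matrix (Fin 3) (Fin 3) ℝ) : frob M = ‖M‖ := by
  rw [Matrix.frobenius_norm_def, frob, Real.sqrt_eq_rpow]
  congr 1
  refine Finset.sum_congr rfl fun i _ => Finset.sum_congr rfl fun j _ => ?_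
  rw [Real.rpow_two, Real.norm_eq_abs, sq_abs]

lemma norm_orth (R : Matrix (Fin 3) (Fin 3) ℝ) (hR : Rᵀ * R = 1) :
    ‖R‖ = Real.sqrt 3 := by
  rw [← frob_eq_norm, frob]
  congr 1
  rw [Finset.sum_comm]
  have : ∀ j, ∑ i, R i j ^ 2 = (Rᵀ * R) j j := by
    intro j
    simp [Matrix.mul_apply, sq]
  simp_rw [this, hR]
  norm_num [Matrix.one_apply]

theorem SO3_frobenius_bound (R Q : Matrix (Fin 3) (Fin 3) ℝ)
    (hR : Rᵀ * R = 1) (hdetR : R.det = 1)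
    (hQ : Qᵀ * Q = 1) (hdetQ : Q.det = 1) :
    frob (Q - R * Qᵀ * R + R - Q * Rᵀ * Q) ≤ 2 * Real.sqrt 3 * frob (R - Q) ^ 2 := by
  have hR' : R * Rᵀ = 1 := mul_eq_one_comm.mp hR
  have hQ' : Q * Qᵀ = 1 := mul_eq_one_comm.mp hQ
  have key : Q - R * Qᵀ * R + R - Q * Rᵀ * Q = (R - Q) * ((R + Q)ᵀ * (Q - R)) := by
    have e1 : (R + Q)ᵀ * (Q - R) = Rᵀ * Q - Qᵀ * R := by
      simp [Matrix.add_mul, Matrix.mul_sub, Matrix.transpose_add, hR, hQ]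
      noncomm_ring
    rw [e1]
    have : (R - Q) * (Rᵀ * Q - Qᵀ * R)
        = R * Rᵀ * Q - R * (Qᵀ * R) - Q * (Rᵀ * Q) + Q * Qᵀ * R := by
      noncomm_ring
    rw [this, hR', hQ']
    noncomm_ring
  rw [key, frob_eq_norm, frob_eq_norm]
  calc ‖(R - Q) * ((R + Q)ᵀ * (Q - R))‖
      ≤ ‖R - Q‖ * ‖(R + Q)ᵀ * (Q - R)‖ := norm_mul_le _ _
    _ ≤ ‖R - Q‖ * (‖(R + Q)ᵀ‖ * ‖Q - R‖) :=
        mul_le_mul_of_nonneg_left (norm_mul_le _ _) (norm_nonneg _)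
    _ ≤ ‖R - Q‖ * ((2 * Real.sqrt 3) * ‖R - Q‖) := by
        rw [Matrix.frobenius_norm_transpose, ← norm_neg (Q - R), neg_sub]
        have hb : ‖R + Q‖ ≤ 2 * Real.sqrt 3 := by
          calc ‖R + Q‖ ≤ ‖R‖ + ‖Q‖ := norm_add_le _ _
            _ = 2 * Real.sqrt 3 := by rw [norm_orth R hR, norm_orth Q hQ]; ring
        exact mul_le_mul_of_nonneg_left
          (mul_le_mul_of_nonneg_right hb (norm_nonneg _)) (norm_nonneg _)
    _ = 2 * Real.sqrt 3 * ‖R - Q‖ ^ 2 := by ring
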